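/- Let τ > 0 and ψ₁, ψ₂ > 0. Let T_A and T_B be independent random variables where T_A is exponentially distributed with rate 1 and T_B is a piecewise exponential random variable with hazard rate ψ₁ on [0,τ) and ψ₂ on [τ,∞), i.e., T_B has density f(s) = ψ₁e^{−ψ₁s} for 0 ≤ s < τ and f(s) = ψ₂e^{−ψ₁τ−ψ₂(s−τ)} for s ≥ τ. Then the concordance coefficient satisfies κ(A,B) = P(T_A > T_B) = (ψ₁/(1+ψ₁))·(1 − e^{−(1+ψ₁)τ}) + e^{−(1+ψ₁)τ}·(ψ₂/(1+ψ₂)). In particular, writing ψⱼ = e^{βⱼ}, this gives the concordance for a piecewise proportional hazards model with exponential baseline, parameters β₁ before the changepoint τ and β₂ after, and it reduces to 1/(1+e^{−β}) when β₁ = β₂ = β. -/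

import Mathlib

open MeasureTheory ProbabilityTheory

/-- The density of a piecewise exponential distribution with changepoint `τ` and
hazard rates `ψ₁` on `[0, τ)` and `ψ₂` on `[τ, ∞)`. -/
noncomputable def piecewiseExpPDFReal (tau psi1 psi2 : ℝ) (s : ℝ) : ℝ :=
  if s < 0 then 0
  else if s < tau then psi1 * Real.exp (-psi1 * s)
  else psi2 * Real.exp (-psi1 * tau - psi2 * (s - tau))

/-- The piecewise exponential measure on `ℝ` with changepoint `τ` and rates `ψ₁, ψ₂`. -/
noncomputable def piecewiseExpMeasure (tau psi1 psi2 : ℝ) : Measure ℝ :=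
  volume.withDensity (fun s => ENNReal.ofReal (piecewiseExpPDFReal tau psi1 psi2 s))

open Real Set Filter Topology

namespace ConcordanceAux

lemma piecewiseExp_nonneg {tau psi1 psi2 : ℝ} (h1 : 0 < psi1) (h2 : 0 < psi2) (s : ℝ) :
    0 ≤ piecewiseExpPDFReal tau psi1 psi2 s := by
  unfold piecewiseExpPDFReal; split_ifs <;> positivity

lemma measurable_piecewiseExp (tau psi1 psi2 : ℝ) :
    Measurable (piecewiseExpPDFReal tau psi1 psi2) := by
  unfold piecewiseExpPDFReal
  exact Measurable.ite measurableSet_Iio measurable_const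
    (Measurable.ite measurableSet_Iio (by fun_prop) (by fun_prop))

lemma integral_exp_neg_mul_Ioi {b : ℝ} (hb : 0 < b) (a : ℝ) :
    ∫ x in Ioi a, Real.exp (-b * x) = Real.exp (-b * a) / b := by
  have hderiv : ∀ x ∈ Ici a, HasDerivAt (fun x => -Real.exp (-b * x) / b)
      (Real.exp (-b * x)) x := by
    intro x _
    have h := (((hasDerivAt_id x).const_mul (-b)).exp).neg.div_const b
    simpa [mul_comm, hb.ne'] using h
  have htend : Tendsto (fun x => -Real.exp (-b * x) / b) atTop (𝓝 (-0 / b)) := by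
    refine Tendsto.div_const (Tendsto.neg ?_) _
    exact tendsto_exp_atBot.comp (tendsto_id.const_mul_atTop_of_neg (neg_neg_iff_pos.2 hb))
  have := integral_Ioi_of_hasDerivAt_of_tendsto' hderiv (exp_neg_integrableOn_Ioi a hb) htend
  rw [this]
  field_simp
  ring

lemma integral_exp_neg_mul_Ioc {b : ℝ} (hb : 0 < b) (a c : ℝ) (hac : a ≤ c) :
    ∫ x in Ioc a c, Real.exp (-b * x) = (Real.exp (-b * a) - Real.exp (-b * c)) / b := by
  rw [← intervalIntegral.integral_of_le hac]
  have hderiv : ∀ x ∈ uIcc a c, HasDerivAt (fun x => -Real.exp (-b * x) / b)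
      (Real.exp (-b * x)) x := by
    intro x _
    have h := (((hasDerivAt_id x).const_mul (-b)).exp).neg.div_const b
    simpa [mul_comm, hb.ne'] using h
  rw [intervalIntegral.integral_eq_sub_of_hasDerivAt hderiv]
  · ring
  · exact (Continuous.intervalIntegrable (by continuity) a c)

lemma expMeasure_Ioi {s : ℝ} (hs : 0 ≤ s) :
    expMeasure 1 (Ioi s) = ENNReal.ofReal (Real.exp (-s)) := by
  rw [expMeasure, gammaMeasure, withDensity_apply _ measurableSet_Ioi]
  have h1 : ∀ x ∈ Ioi s, gammaPDF 1 1 x = ENNReal.ofReal (Real.exp (-x)) := by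
    intro x hx
    rw [gammaPDF_of_nonneg (le_trans hs (le_of_lt hx))]
    norm_num
  rw [setLIntegral_congr_fun_ae measurableSet_Ioi (ae_of_all _ h1),
    ← ofReal_integral_eq_lintegral_ofReal]
  · rw [integral_exp_neg_Ioi]
  · simpa [IntegrableOn] using exp_neg_integrableOn_Ioi s one_pos
  · exact ae_of_all _ fun x => (exp_pos _).le

variable {tau psi1 psi2 : ℝ}

lemma eqOn1 : EqOn (fun s => piecewiseExpPDFReal tau psi1 psi2 s * Real.exp (-s))
    (fun s => psi1 * Real.exp (-(1 + psi1) * s)) (Ico 0 tau) := by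
  intro s hs
  simp only [piecewiseExpPDFReal, if_neg (not_lt.mpr hs.1), if_pos hs.2]
  rw [mul_assoc, ← Real.exp_add]
  ring_nf

lemma eqOn2 (htau : 0 < tau) :
    EqOn (fun s => piecewiseExpPDFReal tau psi1 psi2 s * Real.exp (-s))
    (fun s => (psi2 * Real.exp (-psi1 * tau + psi2 * tau)) * Real.exp (-(1 + psi2) * s))
    (Ici tau) := by
  intro s hs
  have h0 : ¬ s < 0 := not_lt.mpr (le_trans htau.le hs)
  have h1 : ¬ s < tau := not_lt.mpr hs
  simp only [piecewiseExpPDFReal, if_neg h0, if_neg h1]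
  rw [mul_assoc, ← Real.exp_add, mul_assoc, ← Real.exp_add]
  ring_nf

lemma int1 : IntegrableOn (fun s => piecewiseExpPDFReal tau psi1 psi2 s * Real.exp (-s))
    (Ico 0 tau) := by
  have : IntegrableOn (fun s => psi1 * Real.exp (-(1 + psi1) * s)) (Ico 0 tau) := by
    apply ((Continuous.integrableOn_Icc (by continuity)).mono_set Ico_subset_Icc_self)
  exact this.congr_fun (fun s hs => ((eqOn1 hs)).symm) measurableSet_Ico

lemma int2 (htau : 0 < tau) (hpsi2 : 0 < psi2) :
    IntegrableOn (fun s => piecewiseExpPDFReal tau psi1 psi2 s * Real.exp (-s))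
    (Ici tau) := by
  have : IntegrableOn
      (fun s => (psi2 * Real.exp (-psi1 * tau + psi2 * tau)) * Real.exp (-(1 + psi2) * s))
      (Ici tau) := by
    rw [integrableOn_Ici_iff_integrableOn_Ioi]
    exact (exp_neg_integrableOn_Ioi tau (by linarith)).const_mul _
  exact this.congr_fun (fun s hs => ((eqOn2 htau hs)).symm) measurableSet_Ici

lemma key_integral (htau : 0 < tau) (hpsi1 : 0 < psi1) (hpsi2 : 0 < psi2) :
    ∫ s in Ici (0:ℝ), piecewiseExpPDFReal tau psi1 psi2 s * Real.exp (-s)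
      = psi1 / (1 + psi1) * (1 - Real.exp (-(1 + psi1) * tau))
        + Real.exp (-(1 + psi1) * tau) * (psi2 / (1 + psi2)) := by
  have hdisj : Disjoint (Ico (0:ℝ) tau) (Ici tau) := by
    rw [Set.disjoint_left]; intro s hs hs'; exact absurd hs.2 (not_lt.mpr hs')
  rw [← Ico_union_Ici_eq_Ici htau.le,
    setIntegral_union hdisj measurableSet_Ici int1 (int2 htau hpsi2)]
  have e1 : ∫ s in Ico (0:ℝ) tau, piecewiseExpPDFReal tau psi1 psi2 s * Real.exp (-s)
      = psi1 / (1 + psi1) * (1 - Real.exp (-(1 + psi1) * tau)) := by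
    rw [setIntegral_congr_fun measurableSet_Ico eqOn1, integral_Ico_eq_integral_Ioo,
      ← integral_Ioc_eq_integral_Ioo, integral_const_mul,
      integral_exp_neg_mul_Ioc (by linarith) 0 tau htau.le]
    rw [mul_zero, Real.exp_zero]
    field_simp
  have e2 : ∫ s in Ici tau, piecewiseExpPDFReal tau psi1 psi2 s * Real.exp (-s)
      = Real.exp (-(1 + psi1) * tau) * (psi2 / (1 + psi2)) := by
    rw [setIntegral_congr_fun measurableSet_Ici (eqOn2 htau), integral_Ici_eq_integral_Ioi,
      integral_const_mul, integral_exp_neg_mul_Ioi (by linarith : (0:ℝ) < 1 + psi2)]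
    have hE : Real.exp (-psi1 * tau + psi2 * tau) * Real.exp (-(1 + psi2) * tau)
        = Real.exp (-(1 + psi1) * tau) := by
      rw [← Real.exp_add]; ring_nf
    have h3 : psi2 * Real.exp (-psi1 * tau + psi2 * tau)
        * (Real.exp (-(1 + psi2) * tau) / (1 + psi2))
        = (Real.exp (-psi1 * tau + psi2 * tau) * Real.exp (-(1 + psi2) * tau))
          * (psi2 / (1 + psi2)) := by ring
    rw [h3, hE]
  rw [e1, e2]

end ConcordanceAux

open ConcordanceAux

/-- Concordance for a piecewise proportional hazards model with exponential baseline: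
if `T_A ~ Exp(1)` and `T_B` is piecewise exponential with hazard `ψ₁` before `τ`
and `ψ₂` after `τ`, independent of `T_A`, then
`κ(A,B) = P(T_A > T_B)
  = (ψ₁/(1+ψ₁)) * (1 - e^{-(1+ψ₁)τ}) + e^{-(1+ψ₁)τ} * (ψ₂/(1+ψ₂))`.
In particular, when `ψ₁ = ψ₂ = e^β` this reduces to `1/(1 + e^{-β})`. -/
theorem concordance_piecewise_ph
    {Ω : Type*} [MeasureSpace Ω] [IsProbabilityMeasure (ℙ : Measure Ω)]
    (TA TB : Ω → ℝ) (hTA : Measurable TA) (hTB : Measurable TB)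
    (tau psi1 psi2 : ℝ) (htau : 0 < tau) (hpsi1 : 0 < psi1) (hpsi2 : 0 < psi2)
    (hAlaw : Measure.map TA ℙ = expMeasure 1)
    (hBlaw : Measure.map TB ℙ = piecewiseExpMeasure tau psi1 psi2)
    (hindep : IndepFun TA TB ℙ) :
    ℙ {ω | TA ω > TB ω} =
      ENNReal.ofReal (psi1 / (1 + psi1) * (1 - Real.exp (-(1 + psi1) * tau))
        + Real.exp (-(1 + psi1) * tau) * (psi2 / (1 + psi2))) ∧
    (∀ beta : ℝ, psi1 = Real.exp beta → psi2 = Real.exp beta →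
      psi1 / (1 + psi1) * (1 - Real.exp (-(1 + psi1) * tau))
        + Real.exp (-(1 + psi1) * tau) * (psi2 / (1 + psi2))
        = 1 / (1 + Real.exp (-beta))) := by
  constructor
  · haveI : IsProbabilityMeasure (expMeasure 1) := isProbabilityMeasure_expMeasure one_pos
    have hmap : Measure.map (fun ω => (TB ω, TA ω)) ℙ
        = (piecewiseExpMeasure tau psi1 psi2).prod (expMeasure 1) := by
      rw [← hBlaw, ← hAlaw]
      exact (indepFun_iff_map_prod_eq_prod_map_map hTB.aemeasurable hTA.aemeasurable).mp
        hindep.symm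
    have hS : MeasurableSet {p : ℝ × ℝ | p.1 < p.2} :=
      measurableSet_lt measurable_fst measurable_snd
    have h1 : ℙ {ω | TA ω > TB ω}
        = Measure.map (fun ω => (TB ω, TA ω)) ℙ {p : ℝ × ℝ | p.1 < p.2} := by
      rw [Measure.map_apply (hTB.prodMk hTA) hS]
      rfl
    have hg : Measurable fun s : ℝ => expMeasure 1 (Ioi s) :=
      Antitone.measurable (fun a b hab => measure_mono (Ioi_subset_Ioi hab))
    rw [h1, hmap, Measure.prod_apply hS]
    have hpre : ∀ s : ℝ, (Prod.mk s ⁻¹' {p : ℝ × ℝ | p.1 < p.2}) = Ioi s := fun s => rfl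
    simp_rw [hpre]
    rw [piecewiseExpMeasure, lintegral_withDensity_eq_lintegral_mul _
      (measurable_piecewiseExp tau psi1 psi2).ennreal_ofReal hg]
    simp_rw [Pi.mul_apply]
    rw [← lintegral_add_compl
      (fun s => ENNReal.ofReal (piecewiseExpPDFReal tau psi1 psi2 s) * expMeasure 1 (Ioi s))
      (measurableSet_Ici : MeasurableSet (Ici (0:ℝ)))]
    have hIio : ∫⁻ s in (Ici (0:ℝ))ᶜ,
        ENNReal.ofReal (piecewiseExpPDFReal tau psi1 psi2 s) * expMeasure 1 (Ioi s) = 0 := by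
      rw [compl_Ici]
      rw [setLIntegral_congr_fun_ae measurableSet_Iio (ae_of_all _ (fun s (hs : s < 0) => ?_)),
        lintegral_zero]
      simp [piecewiseExpPDFReal, if_pos hs]
    have hIci : ∫⁻ s in Ici (0:ℝ),
        ENNReal.ofReal (piecewiseExpPDFReal tau psi1 psi2 s) * expMeasure 1 (Ioi s)
        = ∫⁻ s in Ici (0:ℝ),
          ENNReal.ofReal (piecewiseExpPDFReal tau psi1 psi2 s * Real.exp (-s)) := by
      refine setLIntegral_congr_fun_ae measurableSet_Ici (ae_of_all _ (fun s hs => ?_))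
      rw [expMeasure_Ioi hs, ← ENNReal.ofReal_mul (piecewiseExp_nonneg hpsi1 hpsi2 s)]
    rw [hIio, add_zero, hIci, ← ofReal_integral_eq_lintegral_ofReal]
    · rw [key_integral htau hpsi1 hpsi2]
    · rw [← Ico_union_Ici_eq_Ici htau.le]
      exact int1.union (int2 htau hpsi2)
    · exact ae_of_all _ fun s => mul_nonneg (piecewiseExp_nonneg hpsi1 hpsi2 s) (exp_pos _).le
  · intro beta h1 h2
    subst h1; subst h2
    have key : ∀ E : ℝ, Real.exp beta / (1 + Real.exp beta) * (1 - E)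
        + E * (Real.exp beta / (1 + Real.exp beta))
        = Real.exp beta / (1 + Real.exp beta) := fun E => by ring
    rw [key]
    rw [div_eq_div_iff (by positivity) (by positivity)]
    rw [mul_add, mul_one, ← Real.exp_add]
    simp
    ring
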